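/- A hard-core configuration on the 2K×3L triangular grid Λ cannot simultaneously display a vertical bridge and a horizontal bridge of different colors: if σ ∈ X agrees with x ∈ {a,b,c} on some vertical stripe C and agrees with y ∈ {a,b,c} on some horizontal stripe S, then x = y. -/

import Mathlib

open Finset

variable (K L : ℕ) [NeZero K] [NeZero L]

/-- Vertices of the `2K × 3L` triangular grid: pairs `(i,j) ∈ (ℤ/2K) × (ℤ/6L)` with `i+j` even. -/
abbrev Vert (K L : ℕ) [NeZero K] [NeZero L] : Type :=
  {p : ZMod (2 * K) × ZMod (6 * L) // (p.1.val + p.2.val) % 2 = 0}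

/-- Adjacency in the triangular grid with periodic boundary conditions. -/
abbrev Adj (v w : Vert K L) : Prop :=
  (w.1.1 = v.1.1 ∧ (w.1.2 = v.1.2 + 2 ∨ w.1.2 = v.1.2 - 2)) ∨
  ((w.1.1 = v.1.1 + 1 ∨ w.1.1 = v.1.1 - 1) ∧ (w.1.2 = v.1.2 + 1 ∨ w.1.2 = v.1.2 - 1))

/-- A particle configuration on the grid. -/
abbrev Cfg (K L : ℕ) [NeZero K] [NeZero L] : Type := Vert K L → Bool

/-- Hard-core condition: no two adjacent occupied sites. -/
abbrev HardCore (σ : Cfg K L) : Prop :=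
  ∀ v w : Vert K L, Adj K L v w → ¬(σ v = true ∧ σ w = true)

/-- Number of particles of a configuration. -/
def nParticles (σ : Cfg K L) : ℕ := (univ.filter fun v => σ v = true).card

/-- The energy (Hamiltonian) `H(σ) = -Σ_v σ(v)`. -/
def energy (σ : Cfg K L) : ℤ := -(nParticles K L σ : ℤ)

/-- The configuration `a`: indicator of `Λ_a` (columns `j ≡ 0 (mod 3)`). -/
def confA : Cfg K L := fun v => decide (v.1.2.val % 3 = 0)

/-- The configuration `b`: indicator of `Λ_b` (columns `j ≡ 1 (mod 3)`). -/
def confB : Cfg K L := fun v => decide (v.1.2.val % 3 = 1)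

/-- The configuration `c`: indicator of `Λ_c` (columns `j ≡ 2 (mod 3)`). -/
def confC : Cfg K L := fun v => decide (v.1.2.val % 3 = 2)

/-- A path in the energy landscape: a finite sequence of hard-core configurations,
consecutive ones differing in at most one vertex. -/
structure HCPath (σ σ' : Cfg K L) where
  n : ℕ
  ω : Fin (n + 1) → Cfg K L
  first : ω 0 = σ
  last : ω (Fin.last n) = σ'
  hc : ∀ i, HardCore K L (ω i)
  step : ∀ i : Fin n,
    ((univ : Finset (Vert K L)).filter fun v => ω i.castSucc v ≠ ω i.succ v).card ≤ 1

/-- Height of a path: maximal energy along it. -/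
noncomputable def pathHeight {σ σ' : Cfg K L} (p : HCPath K L σ σ') : ℤ :=
  Finset.univ.sup' Finset.univ_nonempty fun i => energy K L (p.ω i)

/-- Communication height `Φ(σ,σ')`: minimal height over all paths from `σ` to `σ'`. -/
noncomputable def commHeight (σ σ' : Cfg K L) : ℤ :=
  sInf {h : ℤ | ∃ p : HCPath K L σ σ', pathHeight K L p = h}

/-- The horizontal stripe `S_i = r_{2i} ∪ r_{2i+1}`. -/
abbrev inHStripe (i : ℕ) (v : Vert K L) : Prop :=
  v.1.1 = ((2 * i : ℕ) : ZMod (2 * K)) ∨ v.1.1 = ((2 * i + 1 : ℕ) : ZMod (2 * K))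

/-- The vertical stripe `C_j = c_j ∪ c_{j+1} ∪ c_{j+2}` (column indices mod `6L`). -/
abbrev inVStripe (j : ℕ) (v : Vert K L) : Prop :=
  v.1.2 = ((j : ℕ) : ZMod (6 * L)) ∨ v.1.2 = ((j + 1 : ℕ) : ZMod (6 * L)) ∨
    v.1.2 = ((j + 2 : ℕ) : ZMod (6 * L))

/-- Two configurations agree on a region. -/
def agreesOn (P : Vert K L → Prop) (σ τ : Cfg K L) : Prop := ∀ v, P v → σ v = τ v

lemma exists_vertex_in_stripes (i j r : ℕ) (hi : i < K) (hj : j < 6 * L) (hr : r < 3) :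
    ∃ v : Vert K L, inVStripe K L j v ∧ inHStripe K L i v ∧ v.1.2.val % 3 = r := by
  have h2K : 0 < 2 * K := by have := NeZero.pos K; omega
  have h6L : 0 < 6 * L := by have := NeZero.pos L; omega
  haveI : NeZero (2 * K) := ⟨by omega⟩
  haveI : NeZero (6 * L) := ⟨by omega⟩
  obtain ⟨k, hk3, hjk⟩ : ∃ k, k < 3 ∧ (j + k) % 3 = r :=
    ⟨(r + 3 - j % 3) % 3, by omega, by omega⟩
  have hcv : (((j + k : ℕ) : ZMod (6 * L))).val = (j + k) % (6 * L) := ZMod.val_natCast _ _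
  set row : ℕ := if (j + k) % (6 * L) % 2 = 0 then 2 * i else 2 * i + 1 with hrow
  have hrowlt : row < 2 * K := by rw [hrow]; split <;> omega
  have hrv : ((row : ℕ) : ZMod (2 * K)).val = row := ZMod.val_natCast_of_lt hrowlt
  refine ⟨⟨((row : ZMod (2 * K)), ((j + k : ℕ) : ZMod (6 * L))), ?_⟩, ?_, ?_, ?_⟩
  · simp only [hrv, hcv]
    rw [hrow]; split <;> omega
  · rcases (by omega : k = 0 ∨ k = 1 ∨ k = 2) with rfl | rfl | rfl
    · exact Or.inl (by norm_num)
    · exact Or.inr (Or.inl rfl)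
    · exact Or.inr (Or.inr rfl)
  · simp only [inHStripe]
    rw [hrow]; split
    · exact Or.inl rfl
    · exact Or.inr rfl
  · show (((j + k : ℕ) : ZMod (6 * L))).val % 3 = r
    rw [hcv, Nat.mod_mod_of_dvd _ ⟨2 * L, by ring⟩, hjk]

/-- A hard-core configuration cannot simultaneously display a vertical
bridge and a horizontal bridge of different colors: if `σ` agrees with `x ∈ {a,b,c}` on
some vertical stripe and with `y ∈ {a,b,c}` on some horizontal stripe, then `x = y`. -/
theorem no_bichromatic_bridges (hK : 2 ≤ K) (hL : 1 ≤ L)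
    (σ : Cfg K L) (hσ : HardCore K L σ) (x y : Cfg K L)
    (hx : x = confA K L ∨ x = confB K L ∨ x = confC K L)
    (hy : y = confA K L ∨ y = confB K L ∨ y = confC K L)
    (hvert : ∃ j : ℕ, j < 6 * L ∧ agreesOn K L (inVStripe K L j) σ x)
    (hhor : ∃ i : ℕ, i < K ∧ agreesOn K L (inHStripe K L i) σ y) :
    x = y := by
  obtain ⟨j, hj, hvs⟩ := hvert
  obtain ⟨i, hi, hhs⟩ := hhor
  have key : ∀ r < 3, ∃ v : Vert K L, x v = y v ∧ v.1.2.val % 3 = r := by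
    intro r hr
    obtain ⟨v, h1, h2, h3⟩ := exists_vertex_in_stripes K L i j r hi hj hr
    exact ⟨v, (hvs v h1).symm.trans (hhs v h2), h3⟩
  rcases hx with rfl | rfl | rfl <;> rcases hy with rfl | rfl | rfl
  · rfl
  · obtain ⟨v, e, e3⟩ := key 0 (by norm_num); simp [confA, confB, e3] at e
  · obtain ⟨v, e, e3⟩ := key 0 (by norm_num); simp [confA, confC, e3] at e
  · obtain ⟨v, e, e3⟩ := key 1 (by norm_num); simp [confA, confB, e3] at e
  · rfl
  · obtain ⟨v, e, e3⟩ := key 1 (by norm_num); simp [confB, confC, e3] at e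
  · obtain ⟨v, e, e3⟩ := key 2 (by norm_num); simp [confA, confC, e3] at e
  · obtain ⟨v, e, e3⟩ := key 2 (by norm_num); simp [confB, confC, e3] at e
  · rfl
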